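/- (Desargues' theorem in the projective plane) Let A₁B₁, A₂B₂, A₃B₃ be three distinct lines through a common point O in the real projective plane, with all six points A₁,A₂,A₃,B₁,B₂,B₃ distinct from O and from each other, and A₁,A₂,A₃ (resp. B₁,B₂,B₃) not collinear with each other in degenerate ways so that the intersection points C₁₂ = A₁A₂ ∩ B₁B₂, C₁₃ = A₁A₃ ∩ B₁B₃, C₂₃ = A₂A₃ ∩ B₂B₃ exist and are unique. Then C₁₂, C₁₃, C₂₃ are collinear. -/

import Mathlib

open Projectivization

/-- Three points of the real projective plane are collinear iff their representative
vectors are linearly dependent. -/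
def Col (p q r : Projectivization ℝ (Fin 3 → ℝ)) : Prop :=
  ¬ LinearIndependent ℝ ![p.rep, q.rep, r.rep]

/-- Desargues: if the two triangles A₁A₂A₃ and B₁B₂B₃ are nondegenerate,
perspective from a point O (with all seven points pairwise distinct and the three
perspectivity lines distinct), and corresponding sides lie on distinct lines, then the
three intersection points C₁₂, C₁₃, C₂₃ of corresponding sides are collinear. -/
lemma not_li_iff (u v w : Fin 3 → ℝ) :
    ¬ LinearIndependent ℝ ![u, v, w] ↔
      ∃ g : Fin 3 → ℝ, g 0 • u + g 1 • v + g 2 • w = 0 ∧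
        (g 0 ≠ 0 ∨ g 1 ≠ 0 ∨ g 2 ≠ 0) := by
  rw [Fintype.not_linearIndependent_iff]
  constructor
  · rintro ⟨g, hg, i, hi⟩
    refine ⟨g, ?_, ?_⟩
    · simpa [Fin.sum_univ_three] using hg
    · fin_cases i <;> simp_all
  · rintro ⟨g, hg, hi⟩
    refine ⟨g, by simpa [Fin.sum_univ_three] using hg, ?_⟩
    rcases hi with h | h | h
    exacts [⟨0, h⟩, ⟨1, h⟩, ⟨2, h⟩]

lemma eq_of_rep_smul (p q : Projectivization ℝ (Fin 3 → ℝ)) (c : ℝ) (hc : c ≠ 0)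
    (h : p.rep = c • q.rep) : p = q := by
  rw [← Projectivization.mk_rep p, ← Projectivization.mk_rep q,
    Projectivization.mk_eq_mk_iff]
  exact ⟨Units.mk0 c hc, by simp [Units.smul_def, h]⟩

lemma eq_of_smul_rep (p q : Projectivization ℝ (Fin 3 → ℝ)) (a b : ℝ) (ha : a ≠ 0)
    (hb : b ≠ 0) (h : a • p.rep = b • q.rep) : p = q :=
  eq_of_rep_smul p q (a⁻¹ * b) (by simp [ha, hb]) (by
    rw [mul_smul, ← h, inv_smul_smul₀ ha])

lemma dec (O A B : Projectivization ℝ (Fin 3 → ℝ)) (h : Col O A B)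
    (hOA : O ≠ A) (hOB : O ≠ B) (hAB : A ≠ B) :
    ∃ α β : ℝ, α ≠ 0 ∧ β ≠ 0 ∧ B.rep = α • O.rep + β • A.rep := by
  rw [Col, not_li_iff] at h
  obtain ⟨g, hg, hnz⟩ := h
  have ho := O.rep_nonzero
  have ha := A.rep_nonzero
  have hb := B.rep_nonzero
  have h2 : g 2 ≠ 0 := by
    intro h2
    rw [h2, zero_smul, add_zero] at hg
    have h0 : g 0 ≠ 0 := by
      intro h0; rw [h0, zero_smul, zero_add] at hg
      rcases smul_eq_zero.1 hg with h | h
      · simp_all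
      · exact ha h
    have h1 : g 1 ≠ 0 := by
      intro h1; rw [h1, zero_smul, add_zero] at hg
      rcases smul_eq_zero.1 hg with h | h
      · exact h0 h
      · exact ho h
    exact hOA (eq_of_smul_rep _ _ (g 0) (-(g 1)) h0 (neg_ne_zero.2 h1)
      (by linear_combination (norm := module) hg))
  have h0 : g 0 ≠ 0 := by
    intro h0; rw [h0, zero_smul, zero_add] at hg
    have h1 : g 1 ≠ 0 := by
      intro h1; rw [h1, zero_smul, zero_add] at hg
      rcases smul_eq_zero.1 hg with h | h
      · exact h2 h
      · exact hb h
    exact hAB (eq_of_smul_rep _ _ (g 1) (-(g 2)) h1 (neg_ne_zero.2 h2)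
      (by linear_combination (norm := module) hg))
  have h1 : g 1 ≠ 0 := by
    intro h1; rw [h1, zero_smul, add_zero] at hg
    exact hOB (eq_of_smul_rep _ _ (g 0) (-(g 2)) h0 (neg_ne_zero.2 h2)
      (by linear_combination (norm := module) hg))
  refine ⟨-(g 0) / g 2, -(g 1) / g 2, div_ne_zero (neg_ne_zero.2 h0) h2,
    div_ne_zero (neg_ne_zero.2 h1) h2, ?_⟩
  have key : B.rep = (g 2)⁻¹ • ((-(g 0)) • O.rep + (-(g 1)) • A.rep) := by
    rw [eq_inv_smul_iff₀ h2]
    linear_combination (norm := module) hg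
  rw [key, smul_add, smul_smul, smul_smul]
  congr 1 <;> · congr 1; field_simp

lemma inter (O Ai Aj Bi Bj C : Projectivization ℝ (Fin 3 → ℝ)) (ai bi aj bj : ℝ)
    (hli : LinearIndependent ℝ ![O.rep, Ai.rep, Aj.rep])
    (hai : ai ≠ 0) (hbi : bi ≠ 0) (haj : aj ≠ 0) (hbj : bj ≠ 0)
    (hBi : Bi.rep = ai • O.rep + bi • Ai.rep)
    (hBj : Bj.rep = aj • O.rep + bj • Aj.rep)
    (hCA : Col Ai Aj C) (hCB : Col Bi Bj C) :
    ∃ k : ℝ, k ≠ 0 ∧ C.rep = k • ((aj * bi) • Ai.rep - (ai * bj) • Aj.rep) := by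
  have L : ∀ x y z : ℝ, x • O.rep + y • Ai.rep + z • Aj.rep = 0 →
      x = 0 ∧ y = 0 ∧ z = 0 := by
    intro x y z h
    have := Fintype.linearIndependent_iff.1 hli ![x, y, z]
      (by simpa [Fin.sum_univ_three] using h)
    exact ⟨by simpa using this 0, by simpa using this 1, by simpa using this 2⟩
  rw [Col, not_li_iff] at hCA hCB
  obtain ⟨g, hg, hgnz⟩ := hCA
  obtain ⟨f, hf, hfnz⟩ := hCB
  have hg2 : g 2 ≠ 0 := by
    intro h2
    rw [h2, zero_smul, add_zero] at hg
    obtain ⟨-, e1, e2⟩ := L 0 (g 0) (g 1) (by rw [zero_smul, zero_add]; exact hg)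
    rcases hgnz with h | h | h
    exacts [h e1, h e2, h h2]
  rw [hBi, hBj] at hf
  have big : (f 0 * g 2 * ai + f 1 * g 2 * aj) • O.rep +
      (f 0 * g 2 * bi - f 2 * g 0) • Ai.rep +
      (f 1 * g 2 * bj - f 2 * g 1) • Aj.rep = 0 := by
    linear_combination (norm := module) g 2 • hf - f 2 • hg
  obtain ⟨E1, E2, E3⟩ := L _ _ _ big
  have hf2 : f 2 ≠ 0 := by
    intro h2
    rw [h2] at E2 E3
    have hf0 : f 0 = 0 := by
      have h : f 0 * (g 2 * bi) = 0 := by linear_combination E2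
      exact (mul_eq_zero.1 h).resolve_right (mul_ne_zero hg2 hbi)
    have hf1 : f 1 = 0 := by
      have h : f 1 * (g 2 * bj) = 0 := by linear_combination E3
      exact (mul_eq_zero.1 h).resolve_right (mul_ne_zero hg2 hbj)
    rcases hfnz with h | h | h
    exacts [h hf0, h hf1, h h2]
  have hf0 : f 0 ≠ 0 := by
    intro h0
    have hf1 : f 1 = 0 := by
      have h : f 1 * (g 2 * aj) = 0 := by rw [h0] at E1; linear_combination E1
      exact (mul_eq_zero.1 h).resolve_right (mul_ne_zero hg2 haj)
    have hg0 : g 0 = 0 := by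
      have h : f 2 * g 0 = 0 := by rw [h0] at E2; linear_combination -E2
      exact (mul_eq_zero.1 h).resolve_left hf2
    have hg1 : g 1 = 0 := by
      have h : f 2 * g 1 = 0 := by rw [hf1] at E3; linear_combination -E3
      exact (mul_eq_zero.1 h).resolve_left hf2
    rw [hg0, hg1, zero_smul, zero_smul, zero_add, zero_add] at hg
    exact C.rep_nonzero (by simpa [hg2] using smul_eq_zero.1 hg)
  refine ⟨-(f 0) / (f 2 * aj), by simp [hf0, hf2, haj], ?_⟩
  refine smul_right_injective _ hg2 ?_
  have hc2 : g 2 • C.rep = (-(g 0)) • Ai.rep + (-(g 1)) • Aj.rep := by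
    linear_combination (norm := module) hg
  show g 2 • C.rep = g 2 • ((-f 0 / (f 2 * aj)) • ((aj * bi) • Ai.rep - (ai * bj) • Aj.rep))
  rw [hc2]
  match_scalars
  · field_simp
    linear_combination E2
  · field_simp
    linear_combination aj * E3 - bj * E1

theorem stmt_9 (O A1 A2 A3 B1 B2 B3 C12 C13 C23 : Projectivization ℝ (Fin 3 → ℝ))
    (hdist : List.Pairwise (· ≠ ·) [O, A1, A2, A3, B1, B2, B3])
    -- perspective from O
    (hp1 : Col O A1 B1) (hp2 : Col O A2 B2) (hp3 : Col O A3 B3)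
    -- the three lines through O are distinct
    (hl12 : ¬ Col O A1 A2) (hl13 : ¬ Col O A1 A3) (hl23 : ¬ Col O A2 A3)
    -- nondegenerate triangles
    (hA : ¬ Col A1 A2 A3) (hB : ¬ Col B1 B2 B3)
    -- corresponding sides lie on distinct lines
    (hs12 : ¬ (Col A1 A2 B1 ∧ Col A1 A2 B2))
    (hs13 : ¬ (Col A1 A3 B1 ∧ Col A1 A3 B3))
    (hs23 : ¬ (Col A2 A3 B2 ∧ Col A2 A3 B3))
    -- the intersection points of corresponding sides
    (hC12 : Col A1 A2 C12 ∧ Col B1 B2 C12)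
    (hC13 : Col A1 A3 C13 ∧ Col B1 B3 C13)
    (hC23 : Col A2 A3 C23 ∧ Col B2 B3 C23) :
    Col C12 C13 C23 := by
  simp only [List.pairwise_cons, List.mem_cons, List.not_mem_nil, List.mem_singleton,
    forall_eq_or_imp, forall_eq, List.Pairwise.nil, or_false] at hdist
  obtain ⟨⟨dOA1, dOA2, dOA3, dOB1, dOB2, dOB3⟩, ⟨dA12, dA13, dA1B1, dA1B2, dA1B3⟩,
    ⟨dA23, dA2B1, dA2B2, dA2B3⟩, ⟨dA3B1, dA3B2, dA3B3⟩, ⟨dB12, dB13⟩, dB23, -⟩ := hdist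
  obtain ⟨a1, b1, ha1, hb1, hB1⟩ := dec O A1 B1 hp1 dOA1 dOB1 dA1B1
  obtain ⟨a2, b2, ha2, hb2, hB2⟩ := dec O A2 B2 hp2 dOA2 dOB2 dA2B2
  obtain ⟨a3, b3, ha3, hb3, hB3⟩ := dec O A3 B3 hp3 dOA3 dOB3 dA3B3
  simp only [Col, not_not] at hl12 hl13 hl23
  obtain ⟨k12, hk12, hc12⟩ := inter O A1 A2 B1 B2 C12 a1 b1 a2 b2 hl12 ha1 hb1 ha2 hb2
    hB1 hB2 hC12.1 hC12.2
  obtain ⟨k13, hk13, hc13⟩ := inter O A1 A3 B1 B3 C13 a1 b1 a3 b3 hl13 ha1 hb1 ha3 hb3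
    hB1 hB3 hC13.1 hC13.2
  obtain ⟨k23, hk23, hc23⟩ := inter O A2 A3 B2 B3 C23 a2 b2 a3 b3 hl23 ha2 hb2 ha3 hb3
    hB2 hB3 hC23.1 hC23.2
  rw [Col, not_li_iff]
  refine ⟨![a3 / k12, -a2 / k13, a1 / k23], ?_, Or.inl (div_ne_zero ha3 hk12)⟩
  simp only [Matrix.cons_val_zero, Matrix.cons_val_one, Matrix.head_cons,
    Matrix.cons_val_two, Matrix.tail_cons]
  rw [hc12, hc13, hc23]
  match_scalars <;> field_simp <;> ring
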